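/- Let n ≥ 1 be a natural number, let m_0, ..., m_{q−1} be natural numbers with each m_j > 1, let t and s_0, ..., s_{q−1} be positive rational numbers, and let u, v be positive rational numbers. Then there exists a positive rational number x with u < x < v such that x·t is an n-th power and, for every j < q, x·s_j is not an m_j-th power, if and only if, u < v and for every j < q with m_j dividing n, t^{−1}·s_j is not an m_j-th power. -/

import Mathlib

/-- If `p` divides neither numerator nor denominator, the valuation is zero. -/
lemma qe_val_zero {p : ℕ} {x : ℚ} (hnum : ¬ (p : ℤ) ∣ x.num) (hden : ¬ p ∣ x.den) :
    padicValRat p x = 0 := by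
  rw [padicValRat_def, padicValInt.eq_zero_of_not_dvd hnum,
    padicValNat.eq_zero_of_not_dvd hden]
  simp

/-- A nonzero rational whose numerator and denominator are smaller than `p`
has zero `p`-adic valuation. -/
lemma qe_val_zero_of_lt {p : ℕ} {x : ℚ} (hx : x ≠ 0)
    (h1 : x.num.natAbs < p) (h2 : x.den < p) : padicValRat p x = 0 := by
  apply qe_val_zero
  · intro h
    have h' : p ∣ x.num.natAbs := by simpa using Int.natAbs_dvd_natAbs.mpr h
    have hne : x.num.natAbs ≠ 0 := by
      simp [Int.natAbs_eq_zero, Rat.num_ne_zero.mpr hx]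
    exact absurd (Nat.le_of_dvd (Nat.pos_of_ne_zero hne) h') (not_le.mpr h1)
  · intro h
    exact absurd (Nat.le_of_dvd x.pos h) (not_le.mpr h2)

/-- In any real interval `(α, β)` with `0 < α` there is a positive rational with
zero `p`-adic valuation. -/
lemma qe_exists_good_rat (p : ℕ) (hp : p.Prime) {α β : ℝ} (h0 : 0 < α) (hab : α < β) :
    ∃ r : ℚ, 0 < r ∧ α < (r : ℝ) ∧ (r : ℝ) < β ∧ padicValRat p r = 0 := by
  have hba : (0:ℝ) < β - α := by linarith
  obtain ⟨d0, hd0⟩ := exists_nat_gt (3 / (β - α))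
  have hcons : ¬ p ∣ (d0 + 1) ∨ ¬ p ∣ (d0 + 2) := by
    by_contra h
    push_neg at h
    have h1 : p ∣ 1 := by
      have := Nat.dvd_sub h.2 h.1
      simpa using this
    have := Nat.le_of_dvd one_pos h1
    have := hp.one_lt
    omega
  obtain ⟨d, hdp, hdgt⟩ : ∃ d : ℕ, ¬ p ∣ d ∧ 3 / (β - α) < (d : ℝ) := by
    rcases hcons with h | h
    · exact ⟨d0 + 1, h, by push_cast; linarith⟩
    · exact ⟨d0 + 2, h, by push_cast; linarith⟩
  have hd0pos : (0:ℝ) < d := lt_of_le_of_lt (by positivity) hdgt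
  have hdpos : 0 < d := by exact_mod_cast hd0pos
  have h3 : 3 < (β - α) * d := by
    rw [div_lt_iff₀ hba] at hdgt; linarith
  have ha0 : α * d < ((⌊α * (d:ℝ)⌋ + 1 : ℤ) : ℝ) := by
    push_cast
    have := Int.lt_floor_add_one (α * (d:ℝ)); linarith
  have ha0' : ((⌊α * (d:ℝ)⌋ + 1 : ℤ) : ℝ) ≤ α * d + 1 := by
    push_cast
    have := Int.floor_le (α * (d:ℝ)); linarith
  have hconsa : ¬ (p:ℤ) ∣ (⌊α * (d:ℝ)⌋ + 1) ∨ ¬ (p:ℤ) ∣ (⌊α * (d:ℝ)⌋ + 2) := by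
    by_contra h
    push_neg at h
    have h1 : (p:ℤ) ∣ 1 := by
      have := dvd_sub h.2 h.1; simpa using this
    have := Int.le_of_dvd one_pos h1
    have := hp.one_lt
    omega
  obtain ⟨a, hap, haL, haU⟩ : ∃ a : ℤ, ¬ (p:ℤ) ∣ a ∧ α * d < (a : ℝ) ∧ (a : ℝ) < β * d := by
    rcases hconsa with h | h
    · exact ⟨⌊α * (d:ℝ)⌋ + 1, h, ha0, by nlinarith⟩
    · refine ⟨⌊α * (d:ℝ)⌋ + 2, h, ?_, ?_⟩
      · push_cast at ha0 ⊢; linarith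
      · push_cast at ha0' ⊢; nlinarith
  have hapos : 0 < a := by
    have : (0:ℝ) < (a:ℝ) := lt_trans (by positivity) haL
    exact_mod_cast this
  have hcast : (((a : ℚ) / (d : ℚ) : ℚ) : ℝ) = (a:ℝ) / (d:ℝ) := by push_cast; ring
  refine ⟨(a : ℚ) / (d : ℚ), by positivity, ?_, ?_, ?_⟩
  · rw [hcast, lt_div_iff₀ hd0pos]; exact haL
  · rw [hcast, div_lt_iff₀ hd0pos]; exact haU
  · have hrdef : (a : ℚ) / (d : ℚ) = Rat.divInt (a : ℤ) (d : ℤ) := by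
      rw [Rat.divInt_eq_div]; push_cast; ring
    have hnumdvd : ((a : ℚ) / (d : ℚ)).num ∣ a := by
      rw [hrdef]; exact Rat.num_dvd _ (by exact_mod_cast hdpos.ne')
    have hdendvd : (((a : ℚ) / (d : ℚ)).den : ℤ) ∣ (d : ℤ) := by
      rw [hrdef]; exact Rat.den_dvd _ _
    apply qe_val_zero
    · exact fun h => hap (dvd_trans h hnumdvd)
    · intro h
      exact hdp (Int.natCast_dvd_natCast.mp (dvd_trans (Int.natCast_dvd_natCast.mpr h) hdendvd))

/-- Quantifier-elimination lemma for `⟨ℚ⁺; <, ×⟩`: bounded case. -/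
theorem qe_bounded (n : ℕ) (hn : 1 ≤ n) (q : ℕ) (m : Fin q → ℕ) (hm : ∀ j, 1 < m j)
    (t : ℚ) (ht : 0 < t) (s : Fin q → ℚ) (hs : ∀ j, 0 < s j)
    (u v : ℚ) (hu : 0 < u) (hv : 0 < v) :
    (∃ x : ℚ, 0 < x ∧ u < x ∧ x < v ∧ (∃ w : ℚ, x * t = w ^ n) ∧
        ∀ j, ¬ ∃ w : ℚ, x * s j = w ^ m j) ↔
      (u < v ∧ ∀ j, m j ∣ n → ¬ ∃ w : ℚ, t⁻¹ * s j = w ^ m j) := by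
  constructor
  · rintro ⟨x, hx0, hux, hxv, ⟨w, hw⟩, hxs⟩
    refine ⟨hux.trans hxv, ?_⟩
    rintro j ⟨k, hk⟩ ⟨y, hy⟩
    refine hxs j ⟨w ^ k * y, ?_⟩
    have hx : x * s j = (x * t) * (t⁻¹ * s j) := by
      field_simp <;> ring
    rw [hx, hw, hy, mul_pow, ← pow_mul, mul_comm k (m j), ← hk]
  · rintro ⟨huv, hns⟩
    set M : ℕ := (t.num.natAbs ⊔ t.den) ⊔
      (Finset.univ.sup fun j : Fin q => (s j).num.natAbs ⊔ (s j).den) with hM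
    obtain ⟨p, hpM, hp⟩ := Nat.exists_infinite_primes (M + 1)
    haveI : Fact p.Prime := ⟨hp⟩
    have hsle : ∀ j : Fin q, (s j).num.natAbs ⊔ (s j).den ≤ M :=
      fun j => le_sup_of_le_right
        (Finset.le_sup (f := fun j : Fin q => (s j).num.natAbs ⊔ (s j).den)
          (Finset.mem_univ j))
    have hpt : padicValRat p t = 0 := by
      apply qe_val_zero_of_lt ht.ne'
      · have : t.num.natAbs ≤ M := le_sup_of_le_left le_sup_left
        omega
      · have : t.den ≤ M := le_sup_of_le_left le_sup_right
        omega
    have hps : ∀ j, padicValRat p (s j) = 0 := by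
      intro j
      have h1 := hsle j
      apply qe_val_zero_of_lt (hs j).ne'
      · have : (s j).num.natAbs ≤ (s j).num.natAbs ⊔ (s j).den := le_sup_left
        omega
      · have : (s j).den ≤ (s j).num.natAbs ⊔ (s j).den := le_sup_right
        omega
    have hppos : (0:ℝ) < (p:ℝ) := by exact_mod_cast hp.pos
    set A : ℝ := ((u * t : ℚ) : ℝ) / (p:ℝ) ^ n with hA
    set B : ℝ := ((v * t : ℚ) : ℝ) / (p:ℝ) ^ n with hB
    have hApos : 0 < A := by
      apply div_pos _ (by positivity)
      exact_mod_cast mul_pos hu ht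
    have hAB : A < B := by
      have hlt : ((u * t : ℚ) : ℝ) < ((v * t : ℚ) : ℝ) := by
        exact_mod_cast mul_lt_mul_of_pos_right huv ht
      rw [hA, hB]
      gcongr
    have hnR : ((n:ℝ))⁻¹ > 0 := by positivity
    set α : ℝ := A ^ ((n:ℝ))⁻¹ with hα
    set β : ℝ := B ^ ((n:ℝ))⁻¹ with hβ
    have h0 : 0 < α := Real.rpow_pos_of_pos hApos _
    have hab : α < β := Real.rpow_lt_rpow hApos.le hAB hnR
    obtain ⟨r, hr0, hαr, hrβ, hval⟩ := qe_exists_good_rat p hp h0 hab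
    have hne : n ≠ 0 := by omega
    have hαn : α ^ n = A := Real.rpow_inv_natCast_pow hApos.le hne
    have hβn : β ^ n = B := Real.rpow_inv_natCast_pow (hApos.trans hAB).le hne
    have hAr : A < (r:ℝ) ^ n := by
      rw [← hαn]; exact pow_lt_pow_left₀ hαr h0.le hne
    have hrB : (r:ℝ) ^ n < B := by
      rw [← hβn]; exact pow_lt_pow_left₀ hrβ (by positivity) hne
    set w : ℚ := (p : ℚ) * r with hwdef
    have hw0 : 0 < w := by
      have : (0:ℚ) < (p:ℚ) := by exact_mod_cast hp.pos
      positivity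
    have hwn : ((w ^ n : ℚ) : ℝ) = (r:ℝ) ^ n * (p:ℝ) ^ n := by
      rw [hwdef]; push_cast; ring
    have hut : u * t < w ^ n := by
      have h' : ((u * t : ℚ) : ℝ) < ((w ^ n : ℚ) : ℝ) := by
        rw [hwn]
        rw [hA, div_lt_iff₀ (by positivity)] at hAr
        linarith
      exact_mod_cast h'
    have hvt : w ^ n < v * t := by
      have h' : ((w ^ n : ℚ) : ℝ) < ((v * t : ℚ) : ℝ) := by
        rw [hwn]
        rw [hB, lt_div_iff₀ (by positivity)] at hrB
        linarith
      exact_mod_cast h'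
    have hvw : padicValRat p w = 1 := by
      rw [hwdef, padicValRat.mul (by exact_mod_cast hp.pos.ne') hr0.ne', hval,
        padicValRat.self hp.one_lt]
      ring
    refine ⟨w ^ n / t, div_pos (pow_pos hw0 n) ht, ?_, ?_, ⟨w, div_mul_cancel₀ (w ^ n) ht.ne'⟩, ?_⟩
    · rw [lt_div_iff₀ ht]; exact hut
    · rw [div_lt_iff₀ ht]; exact hvt
    · rintro j ⟨y, hy⟩
      by_cases hdvd : m j ∣ n
      · obtain ⟨k, hk⟩ := hdvd
        refine hns j ⟨k, hk⟩ ⟨y / w ^ k, ?_⟩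
        have hkey : (t⁻¹ * s j) * w ^ n = y ^ m j := by
          rw [← hy]; field_simp <;> ring
        refine mul_right_cancel₀ (pow_ne_zero n hw0.ne') ?_
        rw [hkey, div_pow, ← pow_mul, mul_comm k (m j), ← hk,
          div_mul_cancel₀ _ (pow_ne_zero n hw0.ne')]
      · have hy0 : y ≠ 0 := by
          intro h
          rw [h] at hy
          have hpos : (0:ℚ) < w ^ n / t * s j := mul_pos (div_pos (pow_pos hw0 n) ht) (hs j)
          rw [hy] at hpos
          simp [zero_pow (by have := hm j; omega : m j ≠ 0)] at hpos
        have hx0 : (w ^ n / t : ℚ) ≠ 0 := (div_pos (pow_pos hw0 n) ht).ne'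
        have hleft : padicValRat p (w ^ n / t * s j) = n := by
          rw [padicValRat.mul hx0 (hs j).ne',
            padicValRat.div (pow_ne_zero n hw0.ne') ht.ne',
            padicValRat.pow, hvw, hpt, hps j]
          ring
        have hright : padicValRat p (w ^ n / t * s j) = (m j) * padicValRat p y := by
          rw [hy, padicValRat.pow]
        have hdvd' : (m j : ℤ) ∣ (n : ℤ) := ⟨padicValRat p y, by omega⟩
        exact hdvd (Int.natCast_dvd_natCast.mp hdvd')
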